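/- For any s, the integral of ((a+b)(1-a)(1-b))^{-s} over the 2-simplex {a,b ≥ 0, a+b ≤ 1} equals 2^{2-s} times the integral over the open unit square (0,1)² of (1+y)^{3(s-1)} · y^{1-s} · (1 - y²x²)^{-s} dx dy. -/

import Mathlib

open MeasureTheory Real

noncomputable def Phi : ℝ × ℝ → ℝ × ℝ :=
  fun q => (q.2 * (1 - q.1) / (1 + q.2), q.2 * (1 + q.1) / (1 + q.2))

noncomputable def PhiD (q : ℝ × ℝ) : ℝ × ℝ →L[ℝ] ℝ × ℝ :=
  LinearMap.toContinuousLinearMap (Matrix.toLin (Module.Basis.finTwoProd ℝ) (Module.Basis.finTwoProd ℝ)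
    !![-q.2 / (1 + q.2), (1 - q.1) / (1 + q.2) ^ 2;
       q.2 / (1 + q.2), (1 + q.1) / (1 + q.2) ^ 2])

theorem hasFDerivAt_Phi (q : ℝ × ℝ) (hq : 1 + q.2 ≠ 0) : HasFDerivAt Phi (PhiD q) q := by
  unfold Phi PhiD
  rw [Matrix.toLin_finTwoProd_toContinuousLinearMap]
  have hsnd : HasFDerivAt (fun p : ℝ × ℝ => p.2) (ContinuousLinearMap.snd ℝ ℝ ℝ) q :=
    hasFDerivAt_snd
  have hfst : HasFDerivAt (fun p : ℝ × ℝ => p.1) (ContinuousLinearMap.fst ℝ ℝ ℝ) q :=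
    hasFDerivAt_fst
  have hinv : HasFDerivAt (fun p : ℝ × ℝ => (1 + p.2)⁻¹)
      ((-(((1 + q.2) ^ 2)⁻¹)) • ((0 : ℝ × ℝ →L[ℝ] ℝ) + ContinuousLinearMap.snd ℝ ℝ ℝ)) q :=
    (hasDerivAt_inv hq).comp_hasFDerivAt q ((hasFDerivAt_const 1 q).add hasFDerivAt_snd)
  have hn1 : HasFDerivAt (fun p : ℝ × ℝ => p.2 * (1 - p.1))
      (q.2 • ((0 : ℝ × ℝ →L[ℝ] ℝ) - ContinuousLinearMap.fst ℝ ℝ ℝ) +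
        (1 - q.1) • ContinuousLinearMap.snd ℝ ℝ ℝ) q :=
    hsnd.mul ((hasFDerivAt_const 1 q).sub hfst)
  have hn2 : HasFDerivAt (fun p : ℝ × ℝ => p.2 * (1 + p.1))
      (q.2 • ((0 : ℝ × ℝ →L[ℝ] ℝ) + ContinuousLinearMap.fst ℝ ℝ ℝ) +
        (1 + q.1) • ContinuousLinearMap.snd ℝ ℝ ℝ) q :=
    hsnd.mul ((hasFDerivAt_const 1 q).add hfst)
  have h1 : HasFDerivAt (fun p : ℝ × ℝ => p.2 * (1 - p.1) * (1 + p.2)⁻¹)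
      ((q.2 * (1 - q.1)) • ((-(((1 + q.2) ^ 2)⁻¹)) •
          ((0 : ℝ × ℝ →L[ℝ] ℝ) + ContinuousLinearMap.snd ℝ ℝ ℝ)) +
        ((1 + q.2)⁻¹) • (q.2 • ((0 : ℝ × ℝ →L[ℝ] ℝ) - ContinuousLinearMap.fst ℝ ℝ ℝ) +
          (1 - q.1) • ContinuousLinearMap.snd ℝ ℝ ℝ)) q := hn1.mul hinv
  have h2 : HasFDerivAt (fun p : ℝ × ℝ => p.2 * (1 + p.1) * (1 + p.2)⁻¹)
      ((q.2 * (1 + q.1)) • ((-(((1 + q.2) ^ 2)⁻¹)) •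
          ((0 : ℝ × ℝ →L[ℝ] ℝ) + ContinuousLinearMap.snd ℝ ℝ ℝ)) +
        ((1 + q.2)⁻¹) • (q.2 • ((0 : ℝ × ℝ →L[ℝ] ℝ) + ContinuousLinearMap.fst ℝ ℝ ℝ) +
          (1 + q.1) • ContinuousLinearMap.snd ℝ ℝ ℝ)) q := hn2.mul hinv
  simp only [div_eq_mul_inv]
  refine (HasFDerivAt.prodMk h1 h2).congr_fderiv ?_
  refine ContinuousLinearMap.ext fun v => ?_
  refine Prod.ext ?_ ?_ <;>
    · simp [ContinuousLinearMap.prod_apply, ContinuousLinearMap.smul_apply]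
      field_simp
      ring

theorem PhiD_det (q : ℝ × ℝ) (hq : 1 + q.2 ≠ 0) :
    (PhiD q).det = -(2 * q.2) / (1 + q.2) ^ 3 := by
  simp only [PhiD, LinearMap.det_toContinuousLinearMap, LinearMap.det_toLin,
    Matrix.det_fin_two_of]
  field_simp
  ring

theorem line_null (a b c : ℝ) (hb : b ≠ 0) : volume {p : ℝ × ℝ | a * p.1 + b * p.2 = c} = 0 := by
  have hm : MeasurableSet {p : ℝ × ℝ | a * p.1 + b * p.2 = c} :=
    measurableSet_eq_fun (by fun_prop) measurable_const
  rw [Measure.volume_eq_prod, Measure.measure_prod_null hm]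
  filter_upwards with x
  have : (Prod.mk x ⁻¹' {p : ℝ × ℝ | a * p.1 + b * p.2 = c}) = {(c - a * x) / b} := by
    ext y
    simp [Set.mem_preimage, eq_div_iff hb]
    constructor <;> intro h <;> linarith [mul_comm b y]
  simp [this]

theorem vline_null (c : ℝ) : volume {p : ℝ × ℝ | p.1 = c} = 0 := by
  have : {p : ℝ × ℝ | p.1 = c} = ({c} : Set ℝ) ×ˢ (Set.univ : Set ℝ) := by
    ext ⟨a, b⟩; simp [eq_comm]
  rw [Measure.volume_eq_prod, this, Measure.prod_prod]
  simp

theorem stmt_3 (s : ℝ) :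
    (∫⁻ p in {p : ℝ × ℝ | 0 ≤ p.1 ∧ 0 ≤ p.2 ∧ p.1 + p.2 ≤ 1},
      ENNReal.ofReal (((p.1 + p.2) * (1 - p.1) * (1 - p.2)) ^ (-s)) ∂volume)
    = ENNReal.ofReal ((2 : ℝ) ^ (2 - s)) *
      ∫⁻ q in (Set.Ioo (0:ℝ) 1) ×ˢ (Set.Ioo (0:ℝ) 1),
        ENNReal.ofReal ((1 + q.2) ^ (3 * (s - 1)) * q.2 ^ (1 - s)
          * (1 - q.2 ^ 2 * q.1 ^ 2) ^ (-s)) ∂volume := by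
  set f : ℝ × ℝ → ENNReal :=
    fun p => ENNReal.ofReal (((p.1 + p.2) * (1 - p.1) * (1 - p.2)) ^ (-s)) with hfdef
  set T : Set (ℝ × ℝ) := {p | 0 < p.1 ∧ p.1 < p.2 ∧ p.1 + p.2 < 1} with hTdef
  set T' : Set (ℝ × ℝ) := {p | 0 < p.2 ∧ p.2 < p.1 ∧ p.1 + p.2 < 1} with hT'def
  have sq_meas : MeasurableSet ((Set.Ioo (0:ℝ) 1) ×ˢ (Set.Ioo (0:ℝ) 1)) :=
    measurableSet_Ioo.prod measurableSet_Ioo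
  have hT'm : MeasurableSet T' := by
    apply MeasurableSet.inter
    · exact measurableSet_lt measurable_const measurable_snd
    apply MeasurableSet.inter
    · exact measurableSet_lt measurable_snd measurable_fst
    · exact measurableSet_lt (measurable_fst.add measurable_snd) measurable_const
  -- Step A : reduce to T ∪ T'
  have stepA : (∫⁻ p in {p : ℝ × ℝ | 0 ≤ p.1 ∧ 0 ≤ p.2 ∧ p.1 + p.2 ≤ 1}, f p ∂volume)
      = ∫⁻ p in T ∪ T', f p ∂volume := by
    apply setLIntegral_congr
    rw [MeasureTheory.ae_eq_set]
    constructor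
    · have hsub : {p : ℝ × ℝ | 0 ≤ p.1 ∧ 0 ≤ p.2 ∧ p.1 + p.2 ≤ 1} \ (T ∪ T') ⊆
          {p : ℝ × ℝ | p.1 = 0} ∪ ({p | 0 * p.1 + 1 * p.2 = 0}
          ∪ ({p | 1 * p.1 + (-1) * p.2 = 0} ∪ {p | 1 * p.1 + 1 * p.2 = 1})) := by
        rintro p ⟨⟨h0a, h0b, hab⟩, hn⟩
        simp only [hTdef, hT'def, Set.mem_union, Set.mem_setOf_eq] at hn ⊢
        rcases eq_or_lt_of_le h0a with h | h
        · exact Or.inl h.symm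
        rcases eq_or_lt_of_le h0b with h' | h'
        · exact Or.inr (Or.inl (by linarith))
        rcases eq_or_lt_of_le hab with h'' | h''
        · exact Or.inr (Or.inr (Or.inr (by linarith)))
        rcases lt_trichotomy p.1 p.2 with hlt | heq | hgt
        · exact absurd (Or.inl ⟨h, hlt, h''⟩) hn
        · exact Or.inr (Or.inr (Or.inl (by linarith)))
        · exact absurd (Or.inr ⟨h', hgt, h''⟩) hn
      refine measure_mono_null hsub ?_
      refine measure_union_null (vline_null 0) (measure_union_null ?_ (measure_union_null ?_ ?_))
        <;> apply line_null <;> norm_num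
    · have hsub2 : (T ∪ T') \ {p : ℝ × ℝ | 0 ≤ p.1 ∧ 0 ≤ p.2 ∧ p.1 + p.2 ≤ 1} ⊆ ∅ := by
        rintro p ⟨hp, hns⟩
        exfalso
        apply hns
        rcases hp with h | h
        · exact ⟨le_of_lt h.1, by linarith [h.2.1, h.1], le_of_lt h.2.2⟩
        · exact ⟨by linarith [h.2.1, h.1], le_of_lt h.1, le_of_lt h.2.2⟩
      exact measure_mono_null hsub2 measure_empty
  -- Step B : split
  have stepB : ∫⁻ p in T ∪ T', f p ∂volume
      = (∫⁻ p in T, f p ∂volume) + ∫⁻ p in T', f p ∂volume := by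
    apply lintegral_union hT'm
    exact Set.disjoint_left.mpr fun p hp hp' => lt_asymm hp.2.1 hp'.2.1
  -- Step C : symmetry
  have hswap : MeasurePreserving (Prod.swap : ℝ × ℝ → ℝ × ℝ) volume volume := by
    rw [Measure.volume_eq_prod]
    exact Measure.measurePreserving_swap
  have stepC : (∫⁻ p in T', f p ∂volume) = ∫⁻ p in T, f p ∂volume := by
    have himg : Prod.swap '' T = T' := by
      ext p
      simp only [Set.mem_image, hTdef, hT'def, Set.mem_setOf_eq, Prod.exists]
      constructor
      · rintro ⟨a, b, ⟨h1, h2, h3⟩, rfl⟩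
        simp only [Prod.fst_swap, Prod.snd_swap]
        exact ⟨h1, h2, by linarith⟩
      · rintro ⟨h1, h2, h3⟩
        exact ⟨p.2, p.1, ⟨h1, h2, by linarith⟩, Prod.ext rfl rfl⟩
    have hfs : ∀ p : ℝ × ℝ, f (Prod.swap p) = f p := by
      intro p
      simp only [hfdef, Prod.fst_swap, Prod.snd_swap]
      congr 2
      ring
    calc ∫⁻ p in T', f p ∂volume = ∫⁻ p in Prod.swap '' T, f p ∂volume := by rw [himg]
      _ = ∫⁻ p in T, f (Prod.swap p) ∂volume :=
        (hswap.setLIntegral_comp_emb MeasurableEquiv.prodComm.measurableEmbedding f T).symm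
      _ = ∫⁻ p in T, f p ∂volume := by simp_rw [hfs]
  -- Step D : change of variables
  have himage : Phi '' ((Set.Ioo (0:ℝ) 1) ×ˢ (Set.Ioo (0:ℝ) 1)) = T := by
    ext p
    constructor
    · rintro ⟨q, ⟨⟨hx0, hx1⟩, hy0, hy1⟩, rfl⟩
      have hy : (0:ℝ) < 1 + q.2 := by linarith
      refine ⟨div_pos (mul_pos hy0 (by linarith)) hy, ?_, ?_⟩
      · apply div_lt_div_of_pos_right ?_ hy
        nlinarith
      · have : (Phi q).1 + (Phi q).2 = 2 * q.2 / (1 + q.2) := by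
          simp only [Phi]
          field_simp
          ring
        rw [this]
        rw [div_lt_one hy]
        linarith
    · rintro ⟨h0, hlt, hsum⟩
      have hc0 : (0:ℝ) < p.1 + p.2 := by linarith
      have hc1 : p.1 + p.2 < 1 := hsum
      have h2c : (0:ℝ) < 2 - (p.1 + p.2) := by linarith
      refine ⟨((p.2 - p.1) / (p.1 + p.2), (p.1 + p.2) / (2 - (p.1 + p.2))), ⟨⟨?_, ?_⟩, ?_, ?_⟩, ?_⟩
      · exact div_pos (by linarith) hc0
      · rw [div_lt_one hc0]; linarith
      · exact div_pos hc0 h2c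
      · rw [div_lt_one h2c]; linarith
      · have hden : 1 + (p.1 + p.2) / (2 - (p.1 + p.2)) = 2 / (2 - (p.1 + p.2)) := by
          field_simp
          ring
        simp only [Phi]
        refine Prod.ext ?_ ?_ <;>
          · simp only [hden]
            field_simp
            ring
  have hinj : Set.InjOn Phi ((Set.Ioo (0:ℝ) 1) ×ˢ (Set.Ioo (0:ℝ) 1)) := by
    rintro ⟨x1, y1⟩ ⟨⟨hx10, hx11⟩, hy10, hy11⟩ ⟨x2, y2⟩ ⟨⟨hx20, hx21⟩, hy20, hy21⟩ h
    simp only [Phi, Prod.mk.injEq] at h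
    obtain ⟨h1, h2⟩ := h
    have d1 : (0:ℝ) < 1 + y1 := by linarith
    have d2 : (0:ℝ) < 1 + y2 := by linarith
    rw [div_eq_div_iff d1.ne' d2.ne'] at h1 h2
    have hy : y1 = y2 := by linear_combination (1/2) * h1 + (1/2) * h2
    subst hy
    have hx : x1 = x2 := by
      have h' : (y1 * (1 + y1)) * x1 = (y1 * (1 + y1)) * x2 := by linear_combination (1/2) * h2 - (1/2) * h1
      exact mul_left_cancel₀ (by positivity) h'
    simp [hx]
  have stepD : (∫⁻ p in T, f p ∂volume)
      = ∫⁻ q in (Set.Ioo (0:ℝ) 1) ×ˢ (Set.Ioo (0:ℝ) 1),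
          ENNReal.ofReal |(PhiD q).det| * f (Phi q) ∂volume := by
    rw [← himage]
    exact lintegral_image_eq_lintegral_abs_det_fderiv_mul volume sq_meas
      (fun q hq => (hasFDerivAt_Phi q (by have := hq.2.1; exact by linarith)).hasFDerivWithinAt)
      hinj f
  -- Step E : pointwise computation
  have stepE : (∫⁻ q in (Set.Ioo (0:ℝ) 1) ×ˢ (Set.Ioo (0:ℝ) 1),
        ENNReal.ofReal |(PhiD q).det| * f (Phi q) ∂volume)
      = ENNReal.ofReal ((2:ℝ) ^ (1 - s)) *
        ∫⁻ q in (Set.Ioo (0:ℝ) 1) ×ˢ (Set.Ioo (0:ℝ) 1),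
          ENNReal.ofReal ((1 + q.2) ^ (3 * (s - 1)) * q.2 ^ (1 - s)
            * (1 - q.2 ^ 2 * q.1 ^ 2) ^ (-s)) ∂volume := by
    rw [← lintegral_const_mul' _ _ ENNReal.ofReal_ne_top]
    apply setLIntegral_congr_fun sq_meas
    intro q hq
    beta_reduce
    obtain ⟨⟨hx0, hx1⟩, hy0, hy1⟩ := hq
    have hA : (0:ℝ) < 1 + q.2 := by linarith
    have hu : (0:ℝ) < 1 - q.2 ^ 2 * q.1 ^ 2 := by
      have e1 : q.1 ^ 2 < 1 := by nlinarith
      have e2 : q.2 ^ 2 < 1 := by nlinarith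
      nlinarith [sq_nonneg q.1, sq_nonneg q.2]
    have hdet : |(PhiD q).det| = 2 * q.2 / (1 + q.2) ^ 3 := by
      rw [PhiD_det q hA.ne', abs_div, abs_neg, abs_of_nonneg (by positivity),
        abs_of_nonneg (by positivity)]
    have hbase : (((Phi q).1 + (Phi q).2) * (1 - (Phi q).1) * (1 - (Phi q).2))
        = 2 * q.2 * (1 - q.2 ^ 2 * q.1 ^ 2) / (1 + q.2) ^ 3 := by
      simp only [Phi]
      field_simp
      ring
    rw [hdet, hfdef]
    simp only [hbase]
    rw [← ENNReal.ofReal_mul (by positivity), ← ENNReal.ofReal_mul (by positivity)]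
    congr 1
    -- real computation
    have hP : (0:ℝ) < (1 + q.2) ^ (3 * s) := Real.rpow_pos_of_pos hA _
    have hQ : (0:ℝ) < (1 + q.2) ^ (3:ℕ) := by positivity
    have e1 : ((1 + q.2) : ℝ) ^ (3 * (s - 1)) = (1 + q.2) ^ (3 * s) / (1 + q.2) ^ (3:ℕ) := by
      rw [← Real.rpow_natCast (1 + q.2) 3, ← Real.rpow_sub hA]
      norm_num
      ring_nf
    have e2 : (2 * q.2 * (1 - q.2 ^ 2 * q.1 ^ 2) / (1 + q.2) ^ (3:ℕ)) ^ (-s)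
        = 2 ^ (-s) * q.2 ^ (-s) * (1 - q.2 ^ 2 * q.1 ^ 2) ^ (-s) * (1 + q.2) ^ (3 * s) := by
      rw [Real.div_rpow (by positivity) (by positivity),
        Real.mul_rpow (by positivity) (by positivity),
        Real.mul_rpow (by positivity) (by positivity),
        ← Real.rpow_natCast (1 + q.2) 3, ← Real.rpow_mul hA.le]
      rw [div_eq_mul_inv, ← Real.rpow_neg hA.le]
      norm_num
    have e3 : (2:ℝ) ^ (1 - s) = 2 * 2 ^ (-s) := by
      rw [show (1:ℝ) - s = 1 + (-s) by ring, Real.rpow_add two_pos, Real.rpow_one]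
    have e4 : q.2 ^ (1 - s) = q.2 * q.2 ^ (-s) := by
      rw [show (1:ℝ) - s = 1 + (-s) by ring, Real.rpow_add hy0, Real.rpow_one]
    rw [e2, e1, e3, e4]
    field_simp
  -- assemble
  rw [stepA, stepB, stepC, stepD, stepE, ← two_mul, ← mul_assoc]
  congr 1
  rw [← ENNReal.ofReal_ofNat 2, ← ENNReal.ofReal_mul (by norm_num)]
  congr 1
  rw [show (2:ℝ) - s = 1 + (1 - s) by ring, Real.rpow_add two_pos, Real.rpow_one]
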